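/- If nonnegative integers n₁ ≥ n₂ ≥ 0 and a₁ ≥ a₂ ≥ a₃ ≥ 0 satisfy F_{n₁} + F_{n₂} = 2^{a₁} + 2^{a₂} + 2^{a₃} with n₁ ≥ 3, then |α^{n₁}/√5 - 2^{a₁}| < 2.9 · max{2^{a₂}, α^{n₂}}, where α = (1+√5)/2. -/

import Mathlib

theorem stmt_15 (n₁ n₂ a₁ a₂ a₃ : ℕ) (hn : n₂ ≤ n₁) (ha₁ : a₂ ≤ a₁) (ha₂ : a₃ ≤ a₂)
    (h : Nat.fib n₁ + Nat.fib n₂ = 2 ^ a₁ + 2 ^ a₂ + 2 ^ a₃) (h3 : 3 ≤ n₁) :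
    |((1 + Real.sqrt 5) / 2) ^ n₁ / Real.sqrt 5 - 2 ^ a₁| <
      2.9 * max ((2 : ℝ) ^ a₂) (((1 + Real.sqrt 5) / 2) ^ n₂) := by
  have hs5 : Real.sqrt 5 ^ 2 = 5 := Real.sq_sqrt (by norm_num)
  have hs0 : (0:ℝ) < Real.sqrt 5 := Real.sqrt_pos.mpr (by norm_num)
  set s := Real.sqrt 5 with hsdef
  have hslb : (2.23:ℝ) < s := by nlinarith
  have hsub : s < 2.24 := by nlinarith
  set α : ℝ := (1 + s)/2 with hα
  set β : ℝ := (1 - s)/2 with hβ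
  have hα1 : (1:ℝ) ≤ α := by rw [hα]; nlinarith
  have hβabs : |β| = (s - 1)/2 := by rw [hβ, abs_of_nonpos (by nlinarith)]; ring
  have hβ1 : |β| ≤ 1 := by rw [hβabs]; nlinarith
  have hfib : ∀ n : ℕ, (Nat.fib n : ℝ) = (α^n - β^n)/s := fun n => Real.coe_fib_eq n
  -- fib n₂ ≤ α ^ n₂
  have hβn2 : -1 ≤ β ^ n₂ := by
    have := abs_pow β n₂ ▸ pow_le_one₀ (abs_nonneg β) hβ1
    have h2 := neg_abs_le (β ^ n₂)
    rw [abs_pow] at h2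
    nlinarith [pow_le_one₀ (abs_nonneg β) hβ1 (n := n₂)]
  have hαn2 : (1:ℝ) ≤ α ^ n₂ := one_le_pow₀ hα1
  have hfible : (Nat.fib n₂ : ℝ) ≤ α ^ n₂ := by
    rw [hfib]
    rw [div_le_iff₀ hs0]
    nlinarith
  -- β bound
  have hβn1 : |β ^ n₁| ≤ 0.24 := by
    rw [abs_pow]
    calc |β| ^ n₁ ≤ |β| ^ 3 := pow_le_pow_of_le_one (abs_nonneg β) hβ1 h3
    _ ≤ ((s-1)/2)^3 := by rw [hβabs]
    _ ≤ 0.24 := by nlinarith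
  have hBbound : |β ^ n₁ / s| ≤ 0.11 := by
    rw [abs_div, abs_of_pos hs0, div_le_iff₀ hs0]
    calc |β ^ n₁| ≤ 0.24 := hβn1
    _ ≤ 0.11 * s := by nlinarith
  -- identity
  have hcast : (Nat.fib n₁ : ℝ) + Nat.fib n₂ = 2 ^ a₁ + 2 ^ a₂ + 2 ^ a₃ := by
    exact_mod_cast congrArg (Nat.cast : ℕ → ℝ) h
  have hid : α ^ n₁ / s - 2 ^ a₁
      = (2 ^ a₂ + 2 ^ a₃ - Nat.fib n₂) + β ^ n₁ / s := by
    have h1 : α ^ n₁ / s = Nat.fib n₁ + β ^ n₁ / s := by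
      rw [hfib n₁]; field_simp; ring
    have h2 : (Nat.fib n₁ : ℝ) = 2 ^ a₁ + 2 ^ a₂ + 2 ^ a₃ - Nat.fib n₂ := by
      linarith [hcast]
    rw [h1, h2]; ring
  set M : ℝ := max ((2:ℝ) ^ a₂) (α ^ n₂) with hM
  have hM2 : (2:ℝ) ^ a₂ ≤ M := le_max_left _ _
  have hMα : α ^ n₂ ≤ M := le_max_right _ _
  have hM1 : (1:ℝ) ≤ M := le_trans (one_le_pow₀ (by norm_num)) hM2
  have h23 : (2:ℝ) ^ a₃ ≤ 2 ^ a₂ := pow_le_pow_right₀ (by norm_num) ha₂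
  have hfibnn : (0:ℝ) ≤ Nat.fib n₂ := by positivity
  rw [hid, abs_lt]
  have hb1 := abs_le.mp hBbound
  constructor
  · linarith [hb1.1, hfible, hM1, hMα, pow_nonneg (by norm_num : (0:ℝ) ≤ 2) a₂, pow_nonneg (by norm_num : (0:ℝ) ≤ 2) a₃]
  · linarith [hb1.2, hfibnn, hM1, hM2, h23]
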